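/- (Corollary of Proposition 1: the optimal density estimator is the true density, independently of the other networks.) Under the hypotheses of Proposition 1 (σ-finite spaces (X, μ), (Z, ν); probability density p* on X with p* > 0 μ-a.e.; conditional density q > 0 (μ⊗ν)-a.e.; joint probability density p_θ > 0 (μ⊗ν)-a.e.; f convex on [0, ∞), f(1) = 0, differentiable on (0, ∞); all relevant integrands integrable), for every measurable p_η : X → ℝ with p_η > 0 μ-a.e., writing L^M(p_η) = ∫ p*·q·f'(p_η q/p_θ) d(μ⊗ν) − ∫ p_θ·f*(f'(p_η q/p_θ)) d(μ⊗ν), one has L^M(p_η) ≤ L^M(p*); in particular the maximizing choice p_η = p* does not depend on p_θ or q. -/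

import Mathlib

open MeasureTheory

/-- The Fenchel conjugate `f*(u) = sup_{x ≥ 0} (u·x − f(x))` of a function
`f : ℝ → ℝ` restricted to the nonnegative reals. -/
noncomputable def fenchelConj (f : ℝ → ℝ) (u : ℝ) : ℝ :=
  sSup {v : ℝ | ∃ x ≥ (0 : ℝ), v = u * x - f x}

/-- Supporting line inequality for a convex function differentiable on `(0, ∞)`. -/
lemma support_line {f : ℝ → ℝ} (hconv : ConvexOn ℝ (Set.Ici (0 : ℝ)) f)
    (hdiff : DifferentiableOn ℝ f (Set.Ioi (0 : ℝ))) {r : ℝ} (hr : 0 < r)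
    {x : ℝ} (hx : 0 ≤ x) : deriv f r * x - f x ≤ deriv f r * r - f r := by
  have hdr : DifferentiableAt ℝ f r :=
    (hdiff r hr).differentiableAt (isOpen_Ioi.mem_nhds hr)
  rcases lt_trichotomy x r with h | h | h
  · have hs := hconv.slope_le_deriv hx hr.le h hdr
    rw [slope_def_field, div_le_iff₀ (by linarith)] at hs
    nlinarith
  · simp [h]
  · have hs := hconv.deriv_le_slope hr.le (hr.le.trans h.le) h hdr
    rw [slope_def_field, le_div_iff₀ (by linarith)] at hs
    nlinarith

lemma fenchelConj_deriv_eq {f : ℝ → ℝ} (hconv : ConvexOn ℝ (Set.Ici (0 : ℝ)) f)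
    (hdiff : DifferentiableOn ℝ f (Set.Ioi (0 : ℝ))) {r : ℝ} (hr : 0 < r) :
    fenchelConj f (deriv f r) = deriv f r * r - f r := by
  apply le_antisymm
  · refine csSup_le ⟨deriv f r * r - f r, ⟨r, hr.le, rfl⟩⟩ ?_
    rintro v ⟨x, hx, rfl⟩
    exact support_line hconv hdiff hr hx
  · apply le_csSup
    · refine ⟨deriv f r * r - f r, ?_⟩
      rintro v ⟨x, hx, rfl⟩
      exact support_line hconv hdiff hr hx
    · exact ⟨r, hr.le, rfl⟩

lemma le_fenchelConj_deriv {f : ℝ → ℝ} (hconv : ConvexOn ℝ (Set.Ici (0 : ℝ)) f)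
    (hdiff : DifferentiableOn ℝ f (Set.Ioi (0 : ℝ))) {s : ℝ} (hs : 0 < s)
    {x : ℝ} (hx : 0 ≤ x) : deriv f s * x - f x ≤ fenchelConj f (deriv f s) := by
  apply le_csSup
  · refine ⟨deriv f s * s - f s, ?_⟩
    rintro v ⟨y, hy, rfl⟩
    exact support_line hconv hdiff hs hy
  · exact ⟨x, hx, rfl⟩

/-- Corollary of Proposition 1: the optimal density estimator is the true
density, independently of the other networks: for every positive-a.e. measurable `p_η`,
`L^M(p_η) ≤ L^M(p*)`, where
`L^M(p_η) = ∫ p*·q·f'(p_η q/p_θ) d(μ⊗ν) − ∫ p_θ·f*(f'(p_η q/p_θ)) d(μ⊗ν)`.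
In particular the maximizing choice `p_η = p*` does not depend on `p_θ` or `q`. -/
theorem fGM_maximized_at_true_density {X Z : Type*} [MeasurableSpace X] [MeasurableSpace Z]
    (μ : Measure X) (ν : Measure Z) [SigmaFinite μ] [SigmaFinite ν]
    (pstar : X → ℝ) (q : X × Z → ℝ) (pθ : X × Z → ℝ) (f : ℝ → ℝ)
    -- p* is a probability density on X, positive μ-a.e.
    (hpstar_meas : Measurable pstar) (hpstar_nonneg : ∀ x, 0 ≤ pstar x)
    (hpstar_int : ∫ x, pstar x ∂μ = 1)
    (hpstar_pos : ∀ᵐ x ∂μ, 0 < pstar x)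
    -- q is a conditional density on Z given X, positive (μ⊗ν)-a.e.
    (hq_meas : Measurable q) (hq_nonneg : ∀ w, 0 ≤ q w)
    (hq_cond : ∀ x, ∫ z, q (x, z) ∂ν = 1)
    (hq_pos : ∀ᵐ w ∂μ.prod ν, 0 < q w)
    -- pθ is a probability density on X × Z, positive (μ⊗ν)-a.e.
    (hpθ_meas : Measurable pθ) (hpθ_nonneg : ∀ w, 0 ≤ pθ w)
    (hpθ_int : ∫ w, pθ w ∂μ.prod ν = 1)
    (hpθ_pos : ∀ᵐ w ∂μ.prod ν, 0 < pθ w)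
    -- f is an f-divergence function, differentiable on (0, ∞)
    (hconv : ConvexOn ℝ (Set.Ici (0 : ℝ)) f) (hf1 : f 1 = 0)
    (hdiff : DifferentiableOn ℝ f (Set.Ioi (0 : ℝ)))
    -- p_η is measurable, positive μ-a.e.
    (pη : X → ℝ) (hpη_meas : Measurable pη) (hpη_pos : ∀ᵐ x ∂μ, 0 < pη x)
    -- integrability of all the relevant integrands
    (hint1 : Integrable
      (fun w : X × Z => pstar w.1 * q w * deriv f (pη w.1 * q w / pθ w)) (μ.prod ν))
    (hint2 : Integrable
      (fun w : X × Z => pθ w * fenchelConj f (deriv f (pη w.1 * q w / pθ w))) (μ.prod ν))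
    (hint3 : Integrable
      (fun w : X × Z => pstar w.1 * q w * deriv f (pstar w.1 * q w / pθ w)) (μ.prod ν))
    (hint4 : Integrable
      (fun w : X × Z => pθ w * fenchelConj f (deriv f (pstar w.1 * q w / pθ w))) (μ.prod ν))
    (hint5 : Integrable
      (fun w : X × Z => pθ w * f (pstar w.1 * q w / pθ w)) (μ.prod ν)) :
    (∫ w : X × Z, pstar w.1 * q w * deriv f (pη w.1 * q w / pθ w) ∂μ.prod ν)
        - ∫ w : X × Z, pθ w * fenchelConj f (deriv f (pη w.1 * q w / pθ w)) ∂μ.prod ν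
      ≤ (∫ w : X × Z, pstar w.1 * q w * deriv f (pstar w.1 * q w / pθ w) ∂μ.prod ν)
          - ∫ w : X × Z, pθ w * fenchelConj f (deriv f (pstar w.1 * q w / pθ w)) ∂μ.prod ν := by
  have hfst : MeasureTheory.Measure.QuasiMeasurePreserving (Prod.fst : X × Z → X)
      (μ.prod ν) μ := MeasureTheory.Measure.quasiMeasurePreserving_fst
  have hpstar_pos' : ∀ᵐ w ∂μ.prod ν, 0 < pstar w.1 := hfst.tendsto_ae.eventually hpstar_pos
  have hpη_pos' : ∀ᵐ w ∂μ.prod ν, 0 < pη w.1 := hfst.tendsto_ae.eventually hpη_pos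
  rw [← integral_sub hint1 hint2, ← integral_sub hint3 hint4]
  apply integral_mono_ae (hint1.sub hint2) (hint3.sub hint4)
  filter_upwards [hpstar_pos', hpη_pos', hq_pos, hpθ_pos] with w h1 h2 h3 h4
  set a := pstar w.1 * q w with ha
  set t := pθ w with ht
  set s := pη w.1 * q w / t with hs
  set r := a / t with hr
  have hspos : 0 < s := div_pos (mul_pos h2 h3) h4
  have hrpos : 0 < r := div_pos (mul_pos h1 h3) h4
  have htr : t * r = a := by rw [hr]; exact mul_div_cancel₀ a h4.ne'
  have key1 : deriv f s * r - f r ≤ fenchelConj f (deriv f s) :=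
    le_fenchelConj_deriv hconv hdiff hspos hrpos.le
  have key2 : fenchelConj f (deriv f r) = deriv f r * r - f r :=
    fenchelConj_deriv_eq hconv hdiff hrpos
  show a * deriv f s - t * fenchelConj f (deriv f s) ≤
    a * deriv f r - t * fenchelConj f (deriv f r)
  rw [key2]
  have e1 : t * (deriv f s * r - f r) ≤ t * fenchelConj f (deriv f s) :=
    mul_le_mul_of_nonneg_left key1 h4.le
  calc a * deriv f s - t * fenchelConj f (deriv f s)
      ≤ a * deriv f s - t * (deriv f s * r - f r) := by linarith
    _ = t * f r := by rw [← htr]; ring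
    _ = a * deriv f r - t * (deriv f r * r - f r) := by rw [← htr]; ring
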